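/- Suppose that for every α, ε > 0 there exists a probability-measure-preserving F₂-system and a non-negative f ∈ L^∞ with ‖f‖_{L¹} ≤ α and sup_n 𝒜_{2n} f ≥ 1 − ε outside a set of measure ε. Then there exists a probability-measure-preserving F₂-system and f ∈ L¹ with sup_n 𝒜_{2n} f(x) = ∞ for almost every x. In particular, the pointwise ergodic theorem for spherical averages on F₂ fails in L¹. -/

import Mathlib

open MeasureTheory

/-- The spherical averaging operator
`𝒜_n f(x) = (4·3^{n-1})⁻¹ Σ_{|g| = n} f(T_g⁻¹ x)`. -/
noncomputable def sphAvg {X : Type*} (T : FreeGroup (Fin 2) → X → X) (n : ℕ)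
    (f : X → ℝ) (x : X) : ℝ :=
  (4 * 3 ^ (n - 1) : ℝ)⁻¹ *
    ∑ᶠ (g : FreeGroup (Fin 2)) (_ : FreeGroup.norm g = n), f (T g⁻¹ x)

open Set

namespace NoL1Aux

instance : Countable (FreeGroup (Fin 2)) := FreeGroup.toWord_injective.countable

instance : Fact ((0:ℝ) < 1) := ⟨one_pos⟩

abbrev F2 : Type := FreeGroup (Fin 2)
abbrev Om : Type := FreeGroup (Fin 2) → ℝ
abbrev A : Type := AddCircle (1 : ℝ)

/-- The sphere of radius `n` in `F₂` is finite. -/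
lemma sphere_finite (n : ℕ) : {g : F2 | FreeGroup.norm g = n}.Finite := by
  have h : {g : F2 | FreeGroup.norm g = n} ⊆ FreeGroup.toWord ⁻¹' {l | l.length = n} :=
    fun g hg => hg
  exact ((List.finite_length_eq _ n).preimage FreeGroup.toWord_injective.injOn).subset h

noncomputable def sph (n : ℕ) : Finset F2 := (sphere_finite n).toFinset

lemma sphAvg_eq_sum {X : Type*} (T : F2 → X → X) (n : ℕ) (f : X → ℝ) (x : X) :
    sphAvg T n f x = (4 * 3 ^ (n - 1) : ℝ)⁻¹ * ∑ g ∈ sph n, f (T g⁻¹ x) := by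
  unfold sphAvg
  congr 1
  have h1 : ∀ g : F2, (∑ᶠ (_ : FreeGroup.norm g = n), f (T g⁻¹ x)) =
      if FreeGroup.norm g = n then f (T g⁻¹ x) else 0 := by
    intro g; classical exact finsum_eq_if
  rw [finsum_congr h1,
    finsum_eq_sum_of_support_subset _ (s := sph n) ?_]
  · exact Finset.sum_congr rfl fun g hg => if_pos ((sphere_finite n).mem_toFinset.mp hg)
  · intro g hg
    have : FreeGroup.norm g = n := by
      by_contra hgn
      simp only [Function.mem_support, if_neg hgn] at hg
      exact hg rfl
    simpa [sph, (sphere_finite n).mem_toFinset] using this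

/-- Termwise congruence for sphAvg. -/
lemma sphAvg_congr {X Y : Type*} (T : F2 → X → X) (S : F2 → Y → Y) (n : ℕ)
    (f : X → ℝ) (h : Y → ℝ) (x : X) (y : Y)
    (hxy : ∀ g : F2, f (T g⁻¹ x) = h (S g⁻¹ y)) :
    sphAvg T n f x = sphAvg S n h y := by
  unfold sphAvg
  congr 1
  exact finsum_congr fun g => finsum_congr fun _ => hxy g

end NoL1Aux

namespace NoL1Aux

/-- The natural "uniform coordinate" map `A → ℝ` taking values in `(0,1]`. -/
noncomputable def unif : A → ℝ := fun a => ((AddCircle.measurableEquivIoc 1 0 a : Ioc (0:ℝ) (0+1)) : ℝ)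

lemma unif_measurable : Measurable unif :=
  measurable_subtype_coe.comp (AddCircle.measurableEquivIoc 1 0).measurable

lemma unif_mem (a : A) : unif a ∈ Ioc (0:ℝ) 1 := by
  have h := (AddCircle.measurableEquivIoc 1 0 a).2
  simp only [zero_add] at h
  exact h

lemma unif_coe (x : ℝ) (hx : x ∈ Ioc (0:ℝ) 1) : unif ((x : ℝ) : A) = x := by
  have hx' : x ∈ Ioc (0:ℝ) (0+1) := by rwa [zero_add]
  have : (AddCircle.equivIoc 1 0) ((x : ℝ) : A) = ⟨x, hx'⟩ := by
    rw [AddCircle.equivIoc, QuotientAddGroup.equivIocMod_coe]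
    exact Subtype.ext ((toIocMod_eq_self _).2 hx')
  show ((AddCircle.equivIoc 1 0) ((x : ℝ) : A) : ℝ) = x
  rw [this]

lemma map_unif : (volume : Measure A).map unif = volume.restrict (Ioc (0:ℝ) 1) := by
  have h := (AddCircle.measurePreserving_mk 1 0).map_eq
  rw [zero_add] at h
  have hmk : Measurable ((↑) : ℝ → A) := AddCircle.measurable_mk'
  calc (volume : Measure A).map unif
      = ((volume.restrict (Ioc (0:ℝ) 1)).map ((↑) : ℝ → A)).map unif := by rw [h]
    _ = (volume.restrict (Ioc (0:ℝ) 1)).map (unif ∘ ((↑) : ℝ → A)) :=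
        (Measure.map_map unif_measurable hmk)
    _ = (volume.restrict (Ioc (0:ℝ) 1)).map id := by
        apply Measure.map_congr
        filter_upwards [ae_restrict_mem measurableSet_Ioc] with x hx
        exact unif_coe x hx
    _ = volume.restrict (Ioc (0:ℝ) 1) := Measure.map_id

end NoL1Aux

namespace Quantile

variable (ν : Measure ℝ) [IsProbabilityMeasure ν]

/-- cdf -/
noncomputable def cdf : ℝ → ℝ := fun x => (ν (Iic x)).toReal

lemma cdf_mono : Monotone (cdf ν) := fun a b hab =>
  ENNReal.toReal_mono (measure_ne_top _ _) (measure_mono (Iic_subset_Iic.2 hab))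

lemma cdf_nonneg (x : ℝ) : 0 ≤ cdf ν x := ENNReal.toReal_nonneg

lemma cdf_le_one (x : ℝ) : cdf ν x ≤ 1 := by
  have h : ν (Iic x) ≤ ν univ := measure_mono (subset_univ _)
  rw [measure_univ] at h
  simpa [cdf] using ENNReal.toReal_mono ENNReal.one_ne_top h

lemma ofReal_cdf (x : ℝ) : ENNReal.ofReal (cdf ν x) = ν (Iic x) :=
  ENNReal.ofReal_toReal (measure_ne_top _ _)

lemma cdf_tendsto_right (t : ℝ) :
    Filter.Tendsto (fun k : ℕ => cdf ν (t + 1 / (k + 1))) Filter.atTop (nhds (cdf ν t)) := by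
  have hInter : (⋂ k : ℕ, Iic (t + 1 / (k + 1 : ℝ))) = Iic t := by
    ext x
    simp only [mem_iInter, mem_Iic]
    constructor
    · intro h
      by_contra hx
      push_neg at hx
      obtain ⟨k, hk⟩ := exists_nat_one_div_lt (sub_pos.2 hx)
      have := h k
      linarith [hk]
    · intro h k
      have : (0:ℝ) < 1 / (k+1) := by positivity
      linarith
  have h := tendsto_measure_iInter_atTop (μ := ν)
    (fun k : ℕ => (measurableSet_Iic (a := t + 1 / (k + 1 : ℝ))).nullMeasurableSet)
    (fun i j hij => Iic_subset_Iic.2 (by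
      have h1 : (1:ℝ) / (j+1) ≤ 1 / (i+1) := by
        apply one_div_le_one_div_of_le (by positivity)
        exact_mod_cast Nat.succ_le_succ hij
      linarith)) ⟨0, measure_ne_top _ _⟩
  rw [hInter] at h
  exact (ENNReal.tendsto_toReal (measure_ne_top _ _)).comp h

lemma cdf_tendsto_atBot :
    Filter.Tendsto (fun k : ℕ => cdf ν (-(k:ℝ))) Filter.atTop (nhds 0) := by
  have hInter : (⋂ k : ℕ, Iic (-(k:ℝ))) = ∅ := by
    ext x
    simp only [mem_iInter, mem_Iic, mem_empty_iff_false, iff_false, not_forall, not_le]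
    obtain ⟨k, hk⟩ := exists_nat_gt (-x)
    exact ⟨k, by linarith⟩
  have h := tendsto_measure_iInter_atTop (μ := ν)
    (fun k : ℕ => (measurableSet_Iic (a := -(k:ℝ))).nullMeasurableSet)
    (fun i j hij => Iic_subset_Iic.2 (by exact_mod_cast neg_le_neg (Nat.cast_le.2 hij)))
    ⟨0, measure_ne_top _ _⟩
  rw [hInter] at h
  simpa [cdf, Function.comp_def] using (ENNReal.tendsto_toReal (by simp : ν ∅ ≠ ⊤)).comp h

lemma cdf_tendsto_atTop :
    Filter.Tendsto (fun k : ℕ => cdf ν (k:ℝ)) Filter.atTop (nhds 1) := by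
  have hU : (⋃ k : ℕ, Iic (k:ℝ)) = univ := by
    ext x
    simp only [mem_iUnion, mem_Iic, mem_univ, iff_true]
    obtain ⟨k, hk⟩ := exists_nat_gt x
    exact ⟨k, hk.le⟩
  have h := tendsto_measure_iUnion_atTop (μ := ν)
    (fun i j hij => Iic_subset_Iic.2 (by exact_mod_cast Nat.cast_le.2 hij))
  rw [hU, measure_univ] at h
  have := (ENNReal.tendsto_toReal ENNReal.one_ne_top).comp h
  simpa [cdf, Function.comp_def] using this

/-- quantile function -/
noncomputable def quant : ℝ → ℝ := fun v => sInf {x | v ≤ cdf ν x}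

lemma quant_nonempty {v : ℝ} (hv1 : v < 1) : {x | v ≤ cdf ν x}.Nonempty := by
  have h := cdf_tendsto_atTop ν
  have := h.eventually_const_lt hv1
  obtain ⟨k, hk⟩ := this.exists
  exact ⟨(k:ℝ), hk.le⟩

lemma quant_bddBelow {v : ℝ} (hv0 : 0 < v) : BddBelow {x | v ≤ cdf ν x} := by
  have h := cdf_tendsto_atBot ν
  have := h.eventually_lt_const hv0
  obtain ⟨k, hk⟩ := this.exists
  refine ⟨-(k:ℝ), fun x hx => ?_⟩
  by_contra hxk
  push_neg at hxk
  have : cdf ν x ≤ cdf ν (-(k:ℝ)) := cdf_mono ν hxk.le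
  have hvx : v ≤ cdf ν x := hx
  linarith

lemma quant_le_iff {v t : ℝ} (hv0 : 0 < v) (hv1 : v < 1) :
    quant ν v ≤ t ↔ v ≤ cdf ν t := by
  constructor
  · intro h
    have hne := quant_nonempty ν hv1
    have key : ∀ k : ℕ, v ≤ cdf ν (t + 1 / (k + 1)) := by
      intro k
      have hlt : sInf {x | v ≤ cdf ν x} < t + 1 / (k + 1) := by
        have : (0:ℝ) < 1 / (k+1) := by positivity
        calc sInf {x | v ≤ cdf ν x} = quant ν v := rfl
          _ ≤ t := h
          _ < t + 1 / (k+1) := by linarith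
      obtain ⟨x, hx, hxlt⟩ := exists_lt_of_csInf_lt hne hlt
      exact le_trans hx (cdf_mono ν hxlt.le)
    exact ge_of_tendsto (cdf_tendsto_right ν t) (Filter.Eventually.of_forall key)
  · intro h
    exact csInf_le (quant_bddBelow ν hv0) h

end Quantile

namespace NoL1Aux
open Quantile

/-- Every Borel probability measure on `ℝ` is the law of a measurable map on the circle. -/
instance : IsProbabilityMeasure (volume : Measure A) :=
  ⟨by rw [AddCircle.measure_univ]; norm_num⟩

lemma exists_map_volume_A (ν : Measure ℝ) [IsProbabilityMeasure ν] :
    ∃ Q : A → ℝ, Measurable Q ∧ (volume : Measure A).map Q = ν := by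
  classical
  set q : ℝ → ℝ := quant ν with hq
  set Q : A → ℝ := fun a => q (unif a) with hQdef
  -- description of preimages of Iic
  have hW : ∀ t : ℝ, ∃ W : Set ℝ, MeasurableSet W ∧ Q ⁻¹' (Iic t) = unif ⁻¹' W ∧
      (volume.restrict (Ioc (0:ℝ) 1)) W = ν (Iic t) := by
    intro t
    refine ⟨(Ioo (0:ℝ) 1 ∩ Iic (cdf ν t)) ∪ (if q 1 ≤ t then {1} else ∅), ?_, ?_, ?_⟩
    · refine ((measurableSet_Ioo.inter measurableSet_Iic).union ?_)
      split <;> simp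
    · ext a
      simp only [mem_preimage, mem_Iic, mem_union, mem_inter_iff, mem_Ioo, mem_Iic]
      have hmem := unif_mem a
      rcases eq_or_lt_of_le hmem.2 with h1 | h1
      · -- unif a = 1
        constructor
        · intro h
          right
          have h' : q (unif a) ≤ t := h
          rw [h1] at h'
          rw [h1, if_pos h']
          exact mem_singleton _
        · intro h
          rcases h with h | h
          · exact absurd h1 (ne_of_lt h.1.2)
          · by_cases hqt : q 1 ≤ t
            · show q (unif a) ≤ t
              rw [h1]; exact hqt
            · rw [if_neg hqt] at h; exact absurd h (notMem_empty _)
      · -- unif a ∈ (0,1)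
        have hiff := quant_le_iff ν (v := unif a) (t := t) hmem.1 h1
        constructor
        · intro h
          exact Or.inl ⟨⟨hmem.1, h1⟩, hiff.1 h⟩
        · intro h
          rcases h with h | h
          · exact hiff.2 h.2
          · exfalso
            by_cases hqt : q 1 ≤ t
            · rw [if_pos hqt] at h
              have : unif a = 1 := h
              exact absurd this (ne_of_lt h1)
            · rw [if_neg hqt] at h; exact absurd h (notMem_empty _)
    · -- measure computation
      have hsingle : (volume.restrict (Ioc (0:ℝ) 1)) (if q 1 ≤ t then {1} else ∅) = 0 := by
        split
        · exact le_antisymm (le_trans (Measure.restrict_le_self _) (by simp)) zero_le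
        · simp
      rw [measure_union ?_ (by split <;> simp), hsingle, add_zero]
      swap
      · rw [disjoint_left]
        intro x hx hx2
        split at hx2
        · simp only [mem_singleton_iff] at hx2
          rw [hx2] at hx
          exact absurd hx.1.2 (lt_irrefl _)
        · exact absurd hx2 (notMem_empty _)
      have hc0 : 0 ≤ cdf ν t := cdf_nonneg ν t
      have hc1 : cdf ν t ≤ 1 := cdf_le_one ν t
      rw [Measure.restrict_apply (measurableSet_Ioo.inter measurableSet_Iic)]
      have : (Ioo (0:ℝ) 1 ∩ Iic (cdf ν t)) ∩ Ioc 0 1 = Ioo (0:ℝ) 1 ∩ Iic (cdf ν t) := by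
        apply inter_eq_self_of_subset_left
        exact fun x hx => ⟨hx.1.1, hx.1.2.le⟩
      rw [this, ← ofReal_cdf ν t]
      rcases eq_or_lt_of_le hc1 with h1 | h1
      · rw [h1]
        have : Ioo (0:ℝ) 1 ∩ Iic 1 = Ioo (0:ℝ) 1 :=
          inter_eq_self_of_subset_left (fun x hx => hx.2.le)
        rw [this, Real.volume_Ioo]
        norm_num
      · have : Ioo (0:ℝ) 1 ∩ Iic (cdf ν t) = Ioc 0 (cdf ν t) := by
          ext x
          simp only [mem_inter_iff, mem_Ioo, mem_Iic, mem_Ioc]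
          exact ⟨fun h => ⟨h.1.1, h.2⟩, fun h => ⟨⟨h.1, lt_of_le_of_lt h.2 h1⟩, h.2⟩⟩
        rw [this, Real.volume_Ioc, sub_zero]
  have hQmeas : Measurable Q := by
    apply measurable_of_Iic
    intro t
    obtain ⟨W, hWm, hWeq, -⟩ := hW t
    rw [hWeq]
    exact unif_measurable hWm
  refine ⟨Q, hQmeas, ?_⟩
  haveI : IsProbabilityMeasure ((volume : Measure A).map Q) :=
    Measure.isProbabilityMeasure_map hQmeas.aemeasurable
  apply Measure.ext_of_Iic
  intro t
  obtain ⟨W, hWm, hWeq, hWval⟩ := hW t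
  rw [Measure.map_apply hQmeas measurableSet_Iic, hWeq,
    ← Measure.map_apply unif_measurable hWm, map_unif, hWval]

end NoL1Aux

namespace NoL1Aux

/-- Every probability measure on a nonempty standard Borel space is the law of a
measurable map on the circle. -/
lemma exists_rep {Ω : Type} [MeasurableSpace Ω] [StandardBorelSpace Ω] [Nonempty Ω]
    (ν : Measure Ω) [IsProbabilityMeasure ν] :
    ∃ ρ : A → Ω, Measurable ρ ∧ (volume : Measure A).map ρ = ν := by
  set φ := embeddingReal Ω with hφdef
  have hφ : MeasurableEmbedding φ := measurableEmbedding_embeddingReal Ω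
  obtain ⟨g, hg, hgφ⟩ := hφ.exists_measurable_extend measurable_id (fun _ => ‹Nonempty Ω›)
  haveI : IsProbabilityMeasure (ν.map φ) := Measure.isProbabilityMeasure_map hφ.measurable.aemeasurable
  obtain ⟨Q, hQ, hQm⟩ := exists_map_volume_A (ν.map φ)
  refine ⟨g ∘ Q, hg.comp hQ, ?_⟩
  rw [← Measure.map_map hg hQ, hQm, Measure.map_map hg hφ.measurable, hgφ, Measure.map_id]

/-- Haar probability measure on the infinite torus. -/
noncomputable def gamInf : Measure (ℕ → A) :=
  Measure.addHaarMeasure (⊤ : TopologicalSpace.PositiveCompacts (ℕ → A))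

instance : IsProbabilityMeasure gamInf :=
  ⟨by rw [← TopologicalSpace.PositiveCompacts.coe_top]; exact Measure.addHaarMeasure_self⟩

instance : gamInf.IsAddHaarMeasure := Measure.isAddHaarMeasure_addHaarMeasure _

/-- The restriction homomorphism to finitely many coordinates. -/
noncomputable def resHom (s : Finset ℕ) : (ℕ → A) →+ (∀ _ : s, A) where
  toFun := fun z i => z i
  map_zero' := rfl
  map_add' := fun _ _ => rfl

lemma resHom_surjective (s : Finset ℕ) : Function.Surjective (resHom s) := by
  classical
  intro w
  refine ⟨fun n => if h : n ∈ s then w ⟨n, h⟩ else 0, ?_⟩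
  funext i
  simp only [resHom, AddMonoidHom.coe_mk, ZeroHom.coe_mk, dif_pos i.2]

/-- The marginal of `gamInf` on finitely many coordinates is the product measure. -/
lemma gamInf_marginal (s : Finset ℕ) :
    gamInf.map (fun z (i : s) => z (i : ℕ)) = Measure.pi (fun _ : s => (volume : Measure A)) := by
  haveI : (Measure.pi (fun _ : s => (volume : Measure A))).IsAddHaarMeasure := by constructor
  have hcont : Continuous (resHom s) := continuous_pi fun i => continuous_apply _
  exact (AddMonoidHom.measurePreserving (f := resHom s) hcont (resHom_surjective s)
    (by simp only [measure_univ])).map_eq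

/-- The single-coordinate marginal of `gamInf`. -/
lemma gamInf_marginal_single (m : ℕ) :
    gamInf.map (fun z : ℕ → A => z m) = (volume : Measure A) := by
  have hcont : Continuous (Pi.evalAddMonoidHom (fun _ : ℕ => A) m) := continuous_apply m
  exact (AddMonoidHom.measurePreserving (f := Pi.evalAddMonoidHom (fun _ : ℕ => A) m) hcont
    (fun a => ⟨fun _ => a, rfl⟩) (by simp only [measure_univ])).map_eq

/-- Mapping a finite product measure by componentwise maps. -/
lemma pi_map_comp {ι : Type} [Fintype ι] {β γ : ι → Type}
    [∀ i, MeasurableSpace (β i)] [∀ i, MeasurableSpace (γ i)]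
    (κ : ∀ i, Measure (β i)) [∀ i, IsProbabilityMeasure (κ i)]
    (t : ∀ i, β i → γ i) (ht : ∀ i, Measurable (t i)) :
    (Measure.pi κ).map (fun w i => t i (w i)) = Measure.pi (fun i => (κ i).map (t i)) := by
  haveI : ∀ i, IsProbabilityMeasure ((κ i).map (t i)) :=
    fun i => Measure.isProbabilityMeasure_map (ht i).aemeasurable
  refine (Measure.pi_eq ?_).symm
  intro s hs
  have hmeas : Measurable (fun w : ∀ i, β i => fun i => t i (w i)) :=
    measurable_pi_lambda _ fun i => (ht i).comp (measurable_pi_apply i)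
  rw [Measure.map_apply hmeas (MeasurableSet.univ_pi hs)]
  have hpre : (fun w i => t i (w i)) ⁻¹' (univ.pi s) = univ.pi (fun i => t i ⁻¹' s i) := by
    ext w; simp [Set.mem_pi]
  rw [hpre, Measure.pi_pi]
  exact Finset.prod_congr rfl fun i _ => (Measure.map_apply (ht i) (hs i)).symm

end NoL1Aux

namespace NoL1Aux

/-- The shift action of `F₂` on `Ω = F₂ → ℝ`. -/
def shift (g : F2) (ω : Om) : Om := fun h => ω (h * g)

lemma shift_measurable (g : F2) : Measurable (shift g) :=
  measurable_pi_lambda _ fun _ => measurable_pi_apply _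

lemma shift_one : shift 1 = id := by funext ω h; simp [shift]

lemma shift_mul (g g' : F2) : shift (g * g') = shift g ∘ shift g' := by
  funext ω h; simp [shift, mul_assoc]

/-- Evaluation at the identity. -/
def ev : Om → ℝ := fun ω => ω 1

end NoL1Aux

open NoL1Aux in
/-- If for every `α, ε > 0` there is a probability-measure-preserving `F₂`-system and a
non-negative `f ∈ L^∞` with `‖f‖₁ ≤ α` and `sup_n 𝒜_{2n} f ≥ 1 − ε` outside a set of
measure `ε`, then there is a probability-measure-preserving `F₂`-system and an `f ∈ L¹`
with `sup_n 𝒜_{2n} f(x) = ∞` for almost every `x`: the pointwise ergodic theorem for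
spherical averages on `F₂` fails in `L¹`. -/
theorem no_L1_pointwise_ergodic_theorem
    (H : ∀ α ε : ℝ, 0 < α → 0 < ε →
      ∃ (X : Type) (_ : MeasurableSpace X) (μ : Measure X)
        (_ : IsProbabilityMeasure μ) (T : FreeGroup (Fin 2) → X → X) (f : X → ℝ),
        T 1 = id ∧ (∀ g h : FreeGroup (Fin 2), T (g * h) = T g ∘ T h) ∧
        (∀ g : FreeGroup (Fin 2), MeasurePreserving (T g) μ μ) ∧
        Measurable f ∧ (∀ x, 0 ≤ f x) ∧ (∃ C : ℝ, ∀ x, f x ≤ C) ∧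
        (∫ x, f x ∂μ ≤ α) ∧
        μ {x | ¬ ((1 - ε : ℝ) : EReal) ≤ ⨆ n : ℕ, ((sphAvg T (2 * n) f x : ℝ) : EReal)}
          ≤ ENNReal.ofReal ε) :
    ∃ (X : Type) (_ : MeasurableSpace X) (μ : Measure X)
      (_ : IsProbabilityMeasure μ) (T : FreeGroup (Fin 2) → X → X) (f : X → ℝ),
      T 1 = id ∧ (∀ g h : FreeGroup (Fin 2), T (g * h) = T g ∘ T h) ∧
      (∀ g : FreeGroup (Fin 2), MeasurePreserving (T g) μ μ) ∧
      Integrable f μ ∧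
      ∀ᵐ x ∂μ, (⨆ n : ℕ, ((sphAvg T (2 * n) f x : ℝ) : EReal)) = ⊤ := by
  classical
  have base := fun m : ℕ =>
    H ((2⁻¹:ℝ)^(m+1)/((m:ℝ)+1)) ((2⁻¹:ℝ)^(m+1)) (by positivity) (by positivity)
  choose Xm iX μm hPm Tm fm hT1 hTmul hTmp hfm hf0 hfbd hfint hfbad using base
  -- equivariant factor maps to Ω
  set Φ : ∀ m, Xm m → Om := fun m x h => fm m (Tm m h x) with hΦdef
  have hΦmeas : ∀ m, Measurable (Φ m) :=
    fun m => measurable_pi_lambda _ fun h => (hfm m).comp (hTmp m h).measurable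
  set ν : ℕ → Measure Om := fun m => (μm m).map (Φ m) with hνdef
  have hνP : ∀ m, IsProbabilityMeasure (ν m) := fun m => by
    haveI := hPm m; exact Measure.isProbabilityMeasure_map (hΦmeas m).aemeasurable
  have hint : ∀ m g, Φ m ∘ Tm m g = shift g ∘ Φ m := by
    intro m g; funext x; funext h
    show fm m (Tm m h (Tm m g x)) = fm m (Tm m (h * g) x)
    rw [hTmul m h g]; rfl
  have hSν : ∀ m (g : F2), (ν m).map (shift g) = ν m := by
    intro m g
    show ((μm m).map (Φ m)).map (shift g) = (μm m).map (Φ m)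
    rw [Measure.map_map (shift_measurable g) (hΦmeas m), ← hint m g,
      ← Measure.map_map (hΦmeas m) (hTmp m g).measurable, (hTmp m g).map_eq]
  -- representations on the circle
  have hrep : ∀ m, ∃ ρ : A → Om, Measurable ρ ∧ (volume : Measure A).map ρ = ν m := by
    intro m; haveI := hνP m; exact exists_rep (ν m)
  choose ρ hρmeas hρmap using hrep
  -- coupling
  set Qmap : (ℕ → A) → (ℕ → Om) := fun z m => ρ m (z m) with hQdef
  have hQmeas : Measurable Qmap :=
    measurable_pi_lambda _ fun m => (hρmeas m).comp (measurable_pi_apply m)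
  set μ : Measure (ℕ → Om) := gamInf.map Qmap with hμdef
  haveI : IsProbabilityMeasure μ := Measure.isProbabilityMeasure_map hQmeas.aemeasurable
  -- marginals
  have hmarg : ∀ m : ℕ, μ.map (fun y : ℕ → Om => y m) = ν m := by
    intro m
    rw [hμdef, Measure.map_map (measurable_pi_apply m) hQmeas]
    have h1 : ((fun y : ℕ → Om => y m) ∘ Qmap) = (ρ m) ∘ (fun z : ℕ → A => z m) := rfl
    rw [h1, ← Measure.map_map (hρmeas m) (measurable_pi_apply m), gamInf_marginal_single m,
      hρmap m]
  -- cylinder values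
  have hcylval : ∀ (s : Finset ℕ) (S : Set (∀ _ : s, Om)), MeasurableSet S →
      μ (cylinder s S) = Measure.pi (fun i : s => ν i) S := by
    intro s S hS
    haveI : ∀ i : s, IsProbabilityMeasure (ν i) := fun i => hνP i
    have hρs : Measurable (fun (w : ∀ _ : s, A) (i : s) => ρ i (w i)) :=
      measurable_pi_lambda _ fun i => (hρmeas i).comp (measurable_pi_apply i)
    have hrs : Measurable (fun (z : ℕ → A) (i : s) => z (i:ℕ)) :=
      measurable_pi_lambda _ fun i => measurable_pi_apply _
    rw [hμdef, Measure.map_apply hQmeas (MeasurableSet.cylinder s hS)]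
    have hpre : Qmap ⁻¹' (cylinder s S) =
        (fun (z : ℕ → A) (i : s) => z (i:ℕ)) ⁻¹'
          ((fun (w : ∀ _ : s, A) (i : s) => ρ i (w i)) ⁻¹' S) := rfl
    rw [hpre, ← Measure.map_apply hrs (hρs hS), gamInf_marginal s,
      ← Measure.map_apply hρs hS,
      pi_map_comp (fun _ : s => (volume : Measure A)) (fun i : s => ρ i) (fun i => hρmeas i)]
    have h2 : (fun i : s => (volume : Measure A).map (ρ i)) = fun i : s => ν i :=
      funext fun i => hρmap i
    rw [h2]
  -- the action on the product space
  set TX : F2 → (ℕ → Om) → (ℕ → Om) := fun g y m => shift g (y m) with hTXdef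
  have hTXmeas : ∀ g, Measurable (TX g) :=
    fun g => measurable_pi_lambda _ fun m => (shift_measurable g).comp (measurable_pi_apply m)
  have hTXpres : ∀ g : F2, MeasurePreserving (TX g) μ μ := by
    intro g
    refine ⟨hTXmeas g, ?_⟩
    haveI : IsProbabilityMeasure (μ.map (TX g)) :=
      Measure.isProbabilityMeasure_map (hTXmeas g).aemeasurable
    refine ext_of_generate_finite (measurableCylinders (fun _ : ℕ => Om))
      generateFrom_measurableCylinders.symm isPiSystem_measurableCylinders ?_ ?_
    · intro t ht
      obtain ⟨s, S, hS, rfl⟩ := (mem_measurableCylinders t).1 ht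
      haveI : ∀ i : s, IsProbabilityMeasure (ν i) := fun i => hνP i
      rw [Measure.map_apply (hTXmeas g) (MeasurableSet.cylinder s hS)]
      have hshifts : Measurable (fun (w : ∀ _ : s, Om) (i : s) => shift g (w i)) :=
        measurable_pi_lambda _ fun i => (shift_measurable g).comp (measurable_pi_apply i)
      have hpre : TX g ⁻¹' (cylinder s S) =
          cylinder s ((fun (w : ∀ _ : s, Om) (i : s) => shift g (w i)) ⁻¹' S) := rfl
      rw [hpre, hcylval s _ (hshifts hS), ← Measure.map_apply hshifts hS,
        pi_map_comp (fun i : s => ν i) (fun _ : s => shift g) (fun _ => shift_measurable g),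
        hcylval s S hS]
      have h2 : (fun i : s => (ν i).map (shift g)) = fun i : s => ν i :=
        funext fun i => hSν i g
      rw [h2]
    · rw [measure_univ, measure_univ]
  -- the L¹ function
  set F : (ℕ → Om) → ENNReal := fun y => ∑' m : ℕ, ENNReal.ofReal (((m:ℝ)+1) * (y m 1)) with hFdef
  have hFtermmeas : ∀ m : ℕ,
      Measurable (fun y : ℕ → Om => ENNReal.ofReal (((m:ℝ)+1) * (y m 1))) := by
    intro m
    have h1 : Measurable (fun y : ℕ → Om => y m 1) :=
      (measurable_pi_apply (1:F2)).comp (measurable_pi_apply m)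
    exact (h1.const_mul _).ennreal_ofReal
  have hFmeas : Measurable F := Measurable.ennreal_tsum hFtermmeas
  have hterm : ∀ m : ℕ, ∫⁻ y, ENNReal.ofReal (((m:ℝ)+1) * (y m 1)) ∂μ ≤
      ENNReal.ofReal ((2⁻¹:ℝ) ^ (m+1)) := by
    intro m
    haveI := hPm m
    have hevm : Measurable (fun ω : Om => ENNReal.ofReal (((m:ℝ)+1) * ω 1)) :=
      ((measurable_pi_apply (1:F2)).const_mul _).ennreal_ofReal
    have h1 : ∫⁻ y, ENNReal.ofReal (((m:ℝ)+1) * (y m 1)) ∂μ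
        = ∫⁻ ω, ENNReal.ofReal (((m:ℝ)+1) * ω 1) ∂(ν m) := by
      rw [← hmarg m, lintegral_map hevm (measurable_pi_apply m)]
    have h2 : ∫⁻ ω, ENNReal.ofReal (((m:ℝ)+1) * ω 1) ∂(ν m)
        = ∫⁻ x, ENNReal.ofReal (((m:ℝ)+1) * fm m x) ∂(μm m) := by
      rw [hνdef]
      rw [lintegral_map hevm (hΦmeas m)]
      congr 1
      funext x
      have : Φ m x 1 = fm m x := by
        show fm m (Tm m 1 x) = fm m x
        rw [hT1 m]; rfl
      rw [this]
    have hIm : Integrable (fm m) (μm m) := by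
      obtain ⟨C, hC⟩ := hfbd m
      refine (integrable_const C).mono' (hfm m).aestronglyMeasurable (ae_of_all _ fun x => ?_)
      rw [Real.norm_eq_abs, abs_of_nonneg (hf0 m x)]
      exact hC x
    have h3 : ∫⁻ x, ENNReal.ofReal (((m:ℝ)+1) * fm m x) ∂(μm m)
        = ENNReal.ofReal ((m:ℝ)+1) * ENNReal.ofReal (∫ x, fm m x ∂(μm m)) := by
      have hx : ∀ x, ENNReal.ofReal (((m:ℝ)+1) * fm m x)
          = ENNReal.ofReal ((m:ℝ)+1) * ENNReal.ofReal (fm m x) :=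
        fun x => ENNReal.ofReal_mul (by positivity)
      simp_rw [hx]
      rw [lintegral_const_mul _ (hfm m).ennreal_ofReal,
        ← ofReal_integral_eq_lintegral_ofReal hIm (ae_of_all _ (hf0 m))]
    rw [h1, h2, h3]
    calc ENNReal.ofReal ((m:ℝ)+1) * ENNReal.ofReal (∫ x, fm m x ∂(μm m))
        ≤ ENNReal.ofReal ((m:ℝ)+1) * ENNReal.ofReal ((2⁻¹:ℝ)^(m+1) / ((m:ℝ)+1)) :=
          mul_le_mul_right (ENNReal.ofReal_le_ofReal (hfint m)) _
      _ = ENNReal.ofReal (((m:ℝ)+1) * ((2⁻¹:ℝ)^(m+1) / ((m:ℝ)+1))) :=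
          (ENNReal.ofReal_mul (by positivity)).symm
      _ = ENNReal.ofReal ((2⁻¹:ℝ)^(m+1)) := by
          congr 1
          field_simp
  have hgeom : (∑' m : ℕ, ENNReal.ofReal ((2⁻¹:ℝ) ^ (m+1))) ≠ ⊤ := by
    have hle : ∀ m : ℕ, ENNReal.ofReal ((2⁻¹:ℝ) ^ (m+1)) ≤ (ENNReal.ofReal 2⁻¹) ^ m := by
      intro m
      rw [← ENNReal.ofReal_pow (by norm_num)]
      exact ENNReal.ofReal_le_ofReal
        (pow_le_pow_of_le_one (by norm_num) (by norm_num) (by omega))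
    refine ne_top_of_le_ne_top ?_ (ENNReal.tsum_le_tsum hle)
    rw [ENNReal.tsum_geometric]
    have h2 : (1 : ENNReal) - ENNReal.ofReal 2⁻¹ ≠ 0 := by
      rw [ne_eq, tsub_eq_zero_iff_le, not_le]
      exact ENNReal.ofReal_lt_one.2 (by norm_num)
    exact ENNReal.inv_ne_top.2 h2
  have hFlint : ∫⁻ y, F y ∂μ ≠ ⊤ := by
    have heq : ∫⁻ y, F y ∂μ
        = ∑' m : ℕ, ∫⁻ y, ENNReal.ofReal (((m:ℝ)+1) * (y m 1)) ∂μ :=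
      lintegral_tsum fun m => (hFtermmeas m).aemeasurable
    rw [heq]
    exact ne_top_of_le_ne_top hgeom (ENNReal.tsum_le_tsum hterm)
  set f : (ℕ → Om) → ℝ := fun y => (F y).toReal with hfdef
  have hfInt : Integrable f μ := integrable_toReal_of_lintegral_ne_top hFmeas.aemeasurable hFlint
  -- bad sets
  set bad : ℕ → Set Om := fun m => {ω : Om | ¬ ((1 - (2⁻¹:ℝ)^(m+1) : ℝ) : EReal) ≤
      ⨆ n : ℕ, ((sphAvg shift (2 * n) ev ω : ℝ) : EReal)} with hbaddef
  have hsphmeas : ∀ (k : ℕ), Measurable (fun ω : Om => sphAvg shift k ev ω) := by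
    intro k
    have hrw : (fun ω : Om => sphAvg shift k ev ω)
        = fun ω => (4 * 3 ^ (k - 1) : ℝ)⁻¹ * ∑ g ∈ sph k, ev (shift g⁻¹ ω) := by
      funext ω; exact sphAvg_eq_sum shift k ev ω
    rw [hrw]
    refine Measurable.const_mul (Finset.measurable_sum _ fun g _ => ?_) _
    show Measurable (fun ω : Om => ω (1 * g⁻¹))
    exact measurable_pi_apply _
  have hbadmeas : ∀ m, MeasurableSet (bad m) := by
    intro m
    have hsupm : Measurable (fun ω : Om =>
        ⨆ n : ℕ, ((sphAvg shift (2 * n) ev ω : ℝ) : EReal)) :=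
      Measurable.iSup fun n => measurable_coe_real_ereal.comp (hsphmeas (2 * n))
    exact (measurableSet_le measurable_const hsupm).compl
  have hΦbad : ∀ m, ν m (bad m) ≤ ENNReal.ofReal ((2⁻¹:ℝ)^(m+1)) := by
    intro m
    have heq : ∀ (k:ℕ) (x : Xm m), sphAvg shift k ev (Φ m x) = sphAvg (Tm m) k (fm m) x := by
      intro k x
      refine (sphAvg_congr (Tm m) shift k (fm m) ev x (Φ m x) ?_).symm
      intro g
      show fm m (Tm m g⁻¹ x) = (Φ m x) (1 * g⁻¹)
      rw [one_mul]
    have hset : (Φ m) ⁻¹' (bad m) = {x : Xm m | ¬ ((1 - (2⁻¹:ℝ)^(m+1) : ℝ) : EReal) ≤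
        ⨆ n : ℕ, ((sphAvg (Tm m) (2 * n) (fm m) x : ℝ) : EReal)} := by
      ext x
      have hsup : (⨆ n : ℕ, ((sphAvg shift (2*n) ev (Φ m x) : ℝ) : EReal))
          = ⨆ n : ℕ, ((sphAvg (Tm m) (2*n) (fm m) x : ℝ) : EReal) :=
        iSup_congr fun n => by rw [heq]
      simp only [hbaddef, mem_preimage, mem_setOf_eq, hsup]
    rw [hνdef]
    rw [Measure.map_apply (hΦmeas m) (hbadmeas m), hset]
    exact hfbad m
  have hBX : ∀ m, μ ((fun y : ℕ → Om => y m) ⁻¹' (bad m)) ≤ ENNReal.ofReal ((2⁻¹:ℝ)^(m+1)) := by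
    intro m
    rw [← Measure.map_apply (measurable_pi_apply m) (hbadmeas m), hmarg m]
    exact hΦbad m
  have hBC : ∀ᵐ y ∂μ, ∀ᶠ m in Filter.atTop, y ∉ (fun y : ℕ → Om => y m) ⁻¹' (bad m) :=
    ae_eventually_notMem (ne_top_of_le_ne_top hgeom (ENNReal.tsum_le_tsum hBX))
  have hfin : ∀ᵐ y ∂μ, ∀ g : F2, F (TX g y) < ⊤ := by
    rw [ae_all_iff]
    intro g
    have h0 : ∀ᵐ y ∂μ, F y < ⊤ := ae_lt_top hFmeas hFlint
    rw [← (hTXpres g).map_eq] at h0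
    exact (ae_map_iff (hTXmeas g).aemeasurable
      (measurableSet_lt hFmeas measurable_const)).1 h0
  refine ⟨ℕ → Om, inferInstance, μ, inferInstance, TX, f, ?_, ?_, hTXpres, hfInt, ?_⟩
  · funext y; funext m
    show shift 1 (y m) = y m
    rw [shift_one]; rfl
  · intro g h
    funext y; funext m
    show shift (g * h) (y m) = shift g (shift h (y m))
    rw [shift_mul]; rfl
  · filter_upwards [hBC, hfin] with y hy1 hy2
    obtain ⟨M, hM⟩ := Filter.eventually_atTop.1 hy1
    by_contra hne
    have hlt : (⨆ n : ℕ, ((sphAvg TX (2 * n) f y : ℝ) : EReal)) < ⊤ := Ne.lt_top hne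
    obtain ⟨r, hr1, -⟩ := EReal.lt_iff_exists_real_btwn.1 hlt
    have hclaim : (r : EReal) ≤ ⨆ n : ℕ, ((sphAvg TX (2 * n) f y : ℝ) : EReal) := by
      obtain ⟨m0, hm0⟩ := exists_nat_ge (4 * r)
      set m := max m0 M with hmdef
      have hyB : y ∉ (fun y : ℕ → Om => y m) ⁻¹' (bad m) := hM m (le_max_right _ _)
      have hsup : ((1 - (2⁻¹:ℝ)^(m+1) : ℝ) : EReal) ≤
          ⨆ n : ℕ, ((sphAvg shift (2 * n) ev (y m) : ℝ) : EReal) := not_not.1 hyB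
      have hε : (2⁻¹:ℝ)^(m+1) ≤ 2⁻¹ := by
        calc (2⁻¹:ℝ)^(m+1) ≤ 2⁻¹^1 :=
              pow_le_pow_of_le_one (by norm_num) (by norm_num) (by omega)
          _ = 2⁻¹ := pow_one _
      have h14 : ((4⁻¹ : ℝ) : EReal) <
          ⨆ n : ℕ, ((sphAvg shift (2 * n) ev (y m) : ℝ) : EReal) :=
        lt_of_lt_of_le (EReal.coe_lt_coe_iff.2 (by linarith)) hsup
      obtain ⟨n, hn⟩ := lt_iSup_iff.1 h14
      have han : (4⁻¹ : ℝ) < sphAvg shift (2 * n) ev (y m) := EReal.coe_lt_coe_iff.1 hn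
      have hterm2 : ∀ g : F2, ((m:ℝ)+1) * ev (shift g⁻¹ (y m)) ≤ f (TX g⁻¹ y) := by
        intro g
        have hfin' : F (TX g⁻¹ y) < ⊤ := hy2 g⁻¹
        have hle : ENNReal.ofReal (((m:ℝ)+1) * ((TX g⁻¹ y) m 1)) ≤ F (TX g⁻¹ y) :=
          ENNReal.le_tsum m
        have h2 := ENNReal.toReal_mono hfin'.ne hle
        have h3 : ((m:ℝ)+1) * ((TX g⁻¹ y) m 1) ≤
            (ENNReal.ofReal (((m:ℝ)+1) * ((TX g⁻¹ y) m 1))).toReal := by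
          rcases le_or_gt 0 (((m:ℝ)+1) * ((TX g⁻¹ y) m 1)) with h | h
          · rw [ENNReal.toReal_ofReal h]
          · exact h.le.trans ENNReal.toReal_nonneg
        show ((m:ℝ)+1) * ((TX g⁻¹ y) m 1) ≤ (F (TX g⁻¹ y)).toReal
        exact h3.trans h2
      have havg : ((m:ℝ)+1) * sphAvg shift (2*n) ev (y m) ≤ sphAvg TX (2*n) f y := by
        rw [sphAvg_eq_sum, sphAvg_eq_sum]
        have hrw : ((m:ℝ)+1) * ((4 * 3 ^ (2*n - 1) : ℝ)⁻¹ *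
              ∑ g ∈ sph (2*n), ev (shift g⁻¹ (y m)))
            = (4 * 3 ^ (2*n - 1) : ℝ)⁻¹ *
              ∑ g ∈ sph (2*n), ((m:ℝ)+1) * ev (shift g⁻¹ (y m)) := by
          calc ((m:ℝ)+1) * ((4 * 3 ^ (2*n - 1) : ℝ)⁻¹ *
                ∑ g ∈ sph (2*n), ev (shift g⁻¹ (y m)))
              = (4 * 3 ^ (2*n - 1) : ℝ)⁻¹ *
                (((m:ℝ)+1) * ∑ g ∈ sph (2*n), ev (shift g⁻¹ (y m))) := by ring
            _ = (4 * 3 ^ (2*n - 1) : ℝ)⁻¹ *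
                ∑ g ∈ sph (2*n), ((m:ℝ)+1) * ev (shift g⁻¹ (y m)) := by
                rw [Finset.mul_sum]
        rw [hrw]
        have hpos : (0:ℝ) ≤ (4 * 3 ^ (2*n - 1) : ℝ)⁻¹ := by positivity
        exact mul_le_mul_of_nonneg_left (Finset.sum_le_sum fun g _ => hterm2 g) hpos
      have hrle : r ≤ sphAvg TX (2*n) f y := by
        have hm0m : (m0:ℝ) ≤ (m:ℝ) := by exact_mod_cast Nat.cast_le.2 (le_max_left m0 M)
        have h1 : r ≤ ((m:ℝ)+1) * 4⁻¹ := by nlinarith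
        have h2 : ((m:ℝ)+1) * 4⁻¹ ≤ ((m:ℝ)+1) * sphAvg shift (2*n) ev (y m) :=
          mul_le_mul_of_nonneg_left han.le (by positivity)
        linarith
      exact le_trans (EReal.coe_le_coe_iff.2 hrle)
        (le_iSup (fun n : ℕ => ((sphAvg TX (2 * n) f y : ℝ) : EReal)) n)
    exact absurd hclaim (not_le.2 hr1)
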